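/- Fix σα > 0, σβ > 0 and z₀ > 0, and for λ > 0 let P(λ) = ∬_{{(a,b) ∈ [0,∞)² : a + b > z₀λ}} (4ab/(σα² σβ²)) · exp(−a²/σα² − b²/σβ²) da db. Then: (1) for every λ > 0, P(λ) ≤ (z₀²λ²/σα² + 1) · exp(−z₀²λ²/(σα² + σβ²)); and (2) there exist c > 0 and λ₀ > 0 such that for all λ ≥ λ₀, P(λ) ≥ c · λ · exp(−z₀²λ²/(σα² + σβ²)). -/

import Mathlib

open MeasureTheory

open Set Filter Topology

set_option maxHeartbeats 1000000
/- ### 1D auxiliary lemmas -/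

lemma int1d {A : ℝ} (hA : 0 < A) :
    Integrable (fun x : ℝ => 2 * x / A * Real.exp (-(x ^ 2) / A)) := by
  have h := integrable_rpow_mul_exp_neg_mul_sq (b := A⁻¹) (by positivity)
      (s := (1:ℝ)) (by norm_num)
  simp_rw [Real.rpow_one] at h
  refine (h.const_mul (2 / A)).congr (Filter.Eventually.of_forall fun x => ?_)
  have h2 : -A⁻¹ * x ^ 2 = -(x ^ 2) / A := by ring
  dsimp only
  rw [h2]; ring

lemma tail_int {B : ℝ} (hB : 0 < B) (m : ℝ) :
    ∫ b in Set.Ioi m, 2 * b / B * Real.exp (-(b ^ 2) / B) = Real.exp (-(m ^ 2) / B) := by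
  have hderiv : ∀ x : ℝ, HasDerivAt (fun b : ℝ => -Real.exp (-(b ^ 2) / B))
      (2 * x / B * Real.exp (-(x ^ 2) / B)) x := by
    intro x
    have h1 : HasDerivAt (fun b : ℝ => -(b ^ 2) / B) (-(2 * x) / B) x := by
      simpa using ((hasDerivAt_pow 2 x).neg.div_const B)
    have h3 := h1.exp.fun_neg
    exact h3.congr_deriv (by ring)
  have hint : IntegrableOn (fun b : ℝ => 2 * b / B * Real.exp (-(b ^ 2) / B)) (Set.Ioi m) :=
    (int1d hB).integrableOn
  have htend : Tendsto (fun b : ℝ => -Real.exp (-(b ^ 2) / B)) atTop (𝓝 0) := by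
    rw [← neg_zero]
    refine Tendsto.neg ?_
    have h1 : Tendsto (fun b : ℝ => b ^ 2 / B) atTop atTop :=
      (tendsto_pow_atTop two_ne_zero).atTop_div_const hB
    refine (Real.tendsto_exp_neg_atTop_nhds_zero.comp h1).congr fun x => ?_
    simp [Function.comp, neg_div]
  have := integral_Ioi_of_hasDerivAt_of_tendsto
    (f := fun b : ℝ => -Real.exp (-(b ^ 2) / B))
    (f' := fun b : ℝ => 2 * b / B * Real.exp (-(b ^ 2) / B))
    (a := m) (hderiv m).continuousAt.continuousWithinAt
    (fun x _ => hderiv x) hint htend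
  rw [this]; ring

lemma contW (k : ℝ) : Continuous (fun r : ℝ => Real.exp (-(k * r ^ 2))) := by
  continuity

lemma W_le {k : ℝ} (hk : 0 < k) {c : ℝ} (hc : 0 ≤ c) :
    (∫ r in (0:ℝ)..c, Real.exp (-(k * r ^ 2))) ≤ c := by
  have h := intervalIntegral.integral_mono_on (μ := volume) hc
    ((contW k).intervalIntegrable 0 c)
    (_root_.intervalIntegrable_const (c := (1:ℝ)))
    (fun x _ => Real.exp_le_one_iff.2 (neg_nonpos.2 (by positivity)))
  simpa using h

lemma hasDerivW (k : ℝ) (x : ℝ) :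
    HasDerivAt (fun c : ℝ => ∫ r in (0:ℝ)..c, Real.exp (-(k * r ^ 2)))
      (Real.exp (-(k * x ^ 2))) x :=
  ((contW k).integral_hasStrictDerivAt 0 x).hasDerivAt

lemma claimB {k : ℝ} (hk : 0 < k) {c : ℝ} (hc : 0 ≤ c) :
    2 * k * c * (∫ r in (0:ℝ)..c, Real.exp (-(k * r ^ 2)))
      ≤ k * c ^ 2 + 1 - Real.exp (-(k * c ^ 2)) := by
  set W : ℝ → ℝ := fun c => ∫ r in (0:ℝ)..c, Real.exp (-(k * r ^ 2)) with hW
  set φ : ℝ → ℝ := fun c => k * c ^ 2 + 1 - Real.exp (-(k * c ^ 2)) - 2 * k * c * W c with hφ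
  have hd : ∀ x : ℝ, HasDerivAt φ (2 * k * (x - W x)) x := by
    intro x
    have h1 : HasDerivAt (fun c : ℝ => k * c ^ 2 + 1) (k * (2 * x)) x := by
      simpa using (((hasDerivAt_pow 2 x).const_mul k).add_const 1)
    have h2 : HasDerivAt (fun c : ℝ => Real.exp (-(k * c ^ 2)))
        (Real.exp (-(k * x ^ 2)) * (-(k * (2 * x)))) x := by
      have hb : HasDerivAt (fun c : ℝ => -(k * c ^ 2)) (-(k * (2 * x))) x := by
        simpa using ((hasDerivAt_pow 2 x).const_mul k).fun_neg
      exact hb.exp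
    have h3 : HasDerivAt (fun c : ℝ => 2 * k * c * W c)
        (2 * k * W x + 2 * k * x * Real.exp (-(k * x ^ 2))) x := by
      have ha : HasDerivAt (fun c : ℝ => 2 * k * c) (2 * k) x := by
        simpa using (hasDerivAt_id x).const_mul (2 * k)
      simpa using ha.fun_mul (hasDerivW k x)
    exact ((h1.fun_sub h2).fun_sub h3).congr_deriv (by ring)
  have hmono : MonotoneOn φ (Ici (0:ℝ)) := by
    apply monotoneOn_of_deriv_nonneg (convex_Ici 0)
    · exact Continuous.continuousOn (by
        have : Differentiable ℝ φ := fun x => (hd x).differentiableAt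
        exact this.continuous)
    · exact fun x _ => (hd x).differentiableAt.differentiableWithinAt
    · intro x hx
      rw [interior_Ici] at hx
      rw [(hd x).deriv]
      have : W x ≤ x := W_le hk (le_of_lt hx)
      nlinarith
  have h0 : φ 0 = 0 := by
    simp [hφ, hW]
  have := hmono (self_mem_Ici) hc hc
  rw [h0] at this
  simpa [hφ] using this

lemma I1_eval {k m : ℝ} (c d : ℝ) :
    ∫ a in c..d, 2 * k * (a - m) * Real.exp (-(k * (a - m) ^ 2))
      = Real.exp (-(k * (c - m) ^ 2)) - Real.exp (-(k * (d - m) ^ 2)) := by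
  have hderiv : ∀ x : ℝ, HasDerivAt (fun a : ℝ => -Real.exp (-(k * (a - m) ^ 2)))
      (2 * k * (x - m) * Real.exp (-(k * (x - m) ^ 2))) x := by
    intro x
    have h0 : HasDerivAt (fun a : ℝ => a - m) 1 x := (hasDerivAt_id x).sub_const m
    have h1 : HasDerivAt (fun a : ℝ => -(k * (a - m) ^ 2)) (-(k * (2 * (x - m)))) x := by
      have := ((h0.pow 2).const_mul k).fun_neg
      exact this.congr_deriv (by ring)
    have := h1.exp.fun_neg
    exact this.congr_deriv (by ring)
  have hint : IntervalIntegrable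
      (fun a : ℝ => 2 * k * (a - m) * Real.exp (-(k * (a - m) ^ 2))) volume c d :=
    (by continuity : Continuous fun a : ℝ => 2 * k * (a - m) * Real.exp (-(k * (a - m) ^ 2))).intervalIntegrable c d
  have := intervalIntegral.integral_eq_sub_of_hasDerivAt (fun x _ => hderiv x) hint
  rw [this]; ring

lemma J_eval {k m : ℝ} (t : ℝ) :
    ∫ a in (0:ℝ)..t, Real.exp (-(k * (a - m) ^ 2))
      = (∫ r in (0:ℝ)..m, Real.exp (-(k * r ^ 2)))
        + ∫ r in (0:ℝ)..(t - m), Real.exp (-(k * r ^ 2)) := by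
  have h := intervalIntegral.integral_comp_sub_right (a := (0:ℝ)) (b := t)
    (fun r => Real.exp (-(k * r ^ 2))) m
  rw [h, zero_sub]
  rw [← intervalIntegral.integral_add_adjacent_intervals (a := -m) (b := 0) (c := t - m)
    ((contW k).intervalIntegrable _ _) ((contW k).intervalIntegrable _ _)]
  congr 1
  have h2 := intervalIntegral.integral_comp_neg (a := (0:ℝ)) (b := m)
    (f := fun r => Real.exp (-(k * r ^ 2)))
  simp only [neg_sq, neg_zero] at h2
  exact h2.symm

lemma f_int {A B : ℝ} (hA : 0 < A) (hB : 0 < B) :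
    Integrable (fun p : ℝ × ℝ =>
      4 * p.1 * p.2 / (A * B) * Real.exp (-(p.1 ^ 2) / A - p.2 ^ 2 / B)) := by
  have h := (int1d hA).mul_prod (int1d hB)
  rw [← Measure.volume_eq_prod] at h
  refine h.congr (Filter.Eventually.of_forall fun p => ?_)
  dsimp only
  rw [show -(p.1 ^ 2) / A - p.2 ^ 2 / B = -(p.1 ^ 2) / A + -(p.2 ^ 2) / B by ring,
    Real.exp_add]
  ring

lemma upper_bound {A B t : ℝ} (hA : 0 < A) (hB : 0 < B) (ht : 0 < t) :
    (∫ p in {p : ℝ × ℝ | 0 ≤ p.1 ∧ 0 ≤ p.2 ∧ t < p.1 + p.2},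
        4 * p.1 * p.2 / (A * B) * Real.exp (-(p.1 ^ 2) / A - p.2 ^ 2 / B))
      ≤ (t ^ 2 / A + 1) * Real.exp (-(t ^ 2) / (A + B)) := by
  have hs2 : (0:ℝ) < A + B := by linarith
  have hA' : A ≠ 0 := ne_of_gt hA
  have hB' : B ≠ 0 := ne_of_gt hB
  have hs2' : A + B ≠ 0 := ne_of_gt hs2
  set k : ℝ := (A + B) / (A * B) with hkdef
  set μ : ℝ := t * A / (A + B) with hmdef
  set ν : ℝ := t * B / (A + B) with hndef
  have hkpos : 0 < k := by rw [hkdef]; positivity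
  have hμ0 : 0 ≤ μ := by rw [hmdef]; positivity
  have hν0 : 0 ≤ ν := by rw [hndef]; positivity
  have hμν : μ + ν = t := by rw [hmdef, hndef]; field_simp
  set S : Set (ℝ × ℝ) := {p : ℝ × ℝ | 0 ≤ p.1 ∧ 0 ≤ p.2 ∧ t < p.1 + p.2} with hSdef
  set f : ℝ × ℝ → ℝ :=
    fun p => 4 * p.1 * p.2 / (A * B) * Real.exp (-(p.1 ^ 2) / A - p.2 ^ 2 / B) with hfdef
  set g1 : ℝ → ℝ := fun x => 2 * x / A * Real.exp (-(x ^ 2) / A) with hg1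
  set g2 : ℝ → ℝ := fun y => 2 * y / B * Real.exp (-(y ^ 2) / B) with hg2
  set Hfun : ℝ → ℝ := fun a => g1 a * Real.exp (-(max (t - a) 0) ^ 2 / B) with hHdef
  have hfg : ∀ p : ℝ × ℝ, f p = g1 p.1 * g2 p.2 := by
    intro p; rw [hfdef, hg1, hg2]; dsimp only
    rw [show -(p.1 ^ 2) / A - p.2 ^ 2 / B = -(p.1 ^ 2) / A + -(p.2 ^ 2) / B by ring,
      Real.exp_add]
    ring
  have hS : MeasurableSet S := by
    rw [hSdef]
    have heq : {p : ℝ × ℝ | 0 ≤ p.1 ∧ 0 ≤ p.2 ∧ t < p.1 + p.2}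
        = {p : ℝ × ℝ | 0 ≤ p.1} ∩ ({p : ℝ × ℝ | 0 ≤ p.2} ∩ {p : ℝ × ℝ | t < p.1 + p.2}) := rfl
    rw [heq]
    exact (measurableSet_le measurable_const measurable_fst).inter
      ((measurableSet_le measurable_const measurable_snd).inter
        (measurableSet_lt measurable_const (measurable_fst.add measurable_snd)))
  have hfint : Integrable f := by rw [hfdef]; exact f_int hA hB
  have hcont1 : Continuous (fun x : ℝ => 2 * x / A * Real.exp (-(x ^ 2) / A)) :=
    ((continuous_const.mul continuous_id).div_const A).mul
      (Real.continuous_exp.comp ((continuous_pow 2).neg.div_const A))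
  have hHcont : Continuous Hfun := by
    rw [hHdef, hg1]
    exact hcont1.mul (Real.continuous_exp.comp
      ((((continuous_const.sub continuous_id).max continuous_const).pow 2).neg.div_const B))
  have hHint : Integrable Hfun := by
    refine Integrable.mono' (int1d hA).abs hHcont.aestronglyMeasurable
      (Filter.Eventually.of_forall fun a => ?_)
    rw [hHdef]
    dsimp only
    rw [norm_mul]
    have h1 : Real.exp (-(max (t - a) 0) ^ 2 / B) ≤ 1 :=
      Real.exp_le_one_iff.2
        (div_nonpos_of_nonpos_of_nonneg (neg_nonpos.2 (by positivity)) hB.le)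
    have h2 : ‖Real.exp (-(max (t - a) 0) ^ 2 / B)‖ ≤ 1 := by
      rw [Real.norm_eq_abs, abs_of_pos (Real.exp_pos _)]; exact h1
    calc ‖g1 a‖ * ‖Real.exp (-(max (t - a) 0) ^ 2 / B)‖
        ≤ ‖g1 a‖ * 1 := mul_le_mul_of_nonneg_left h2 (norm_nonneg _)
      _ = |g1 a| := by rw [mul_one, Real.norm_eq_abs]
      _ = |2 * a / A * Real.exp (-(a ^ 2) / A)| := by rw [hg1]
  have hinner : ∀ a : ℝ, (∫ b : ℝ, S.indicator f (a, b)) = (Ici (0:ℝ)).indicator Hfun a := by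
    intro a
    by_cases ha : 0 ≤ a
    · have hb : ∀ b : ℝ, S.indicator f (a, b)
          = (Ici (0:ℝ) ∩ Ioi (t - a)).indicator (fun b => g1 a * g2 b) b := by
        intro b
        by_cases hbin : b ∈ Ici (0:ℝ) ∩ Ioi (t - a)
        · rw [Set.indicator_of_mem hbin, Set.indicator_of_mem]
          · exact hfg (a, b)
          · rw [hSdef]
            refine ⟨ha, hbin.1, ?_⟩
            have := mem_Ioi.mp hbin.2
            show t < a + b
            linarith
        · rw [Set.indicator_of_notMem hbin, Set.indicator_of_notMem]
          intro hmem
          rw [hSdef] at hmem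
          obtain ⟨_, h2, h3⟩ := hmem
          exact hbin ⟨h2, mem_Ioi.mpr (by
            have : t < a + b := h3
            linarith)⟩
      calc (∫ b : ℝ, S.indicator f (a, b))
          = ∫ b : ℝ, (Ici (0:ℝ) ∩ Ioi (t - a)).indicator (fun b => g1 a * g2 b) b := by
            simp_rw [hb]
        _ = ∫ b in Ici (0:ℝ) ∩ Ioi (t - a), g1 a * g2 b :=
            integral_indicator (measurableSet_Ici.inter measurableSet_Ioi)
        _ = ∫ b in Ioi (max (t - a) 0), g1 a * g2 b := by
            refine setIntegral_congr_set ?_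
            have h1 : (Ici (0:ℝ) : Set ℝ) =ᵐ[volume] Ioi (0:ℝ) := Ioi_ae_eq_Ici.symm
            have h2 := ae_eq_set_inter h1
              (Filter.EventuallyEq.refl (ae volume) (Ioi (t - a)))
            refine h2.trans ?_
            rw [Ioi_inter_Ioi, sup_comm]
            exact Filter.EventuallyEq.rfl
        _ = g1 a * ∫ b in Ioi (max (t - a) 0), g2 b := integral_const_mul _ _
        _ = g1 a * Real.exp (-(max (t - a) 0) ^ 2 / B) := by
            rw [hg2]
            rw [tail_int hB]
        _ = (Ici (0:ℝ)).indicator Hfun a := by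
            rw [Set.indicator_of_mem (mem_Ici.mpr ha), hHdef]
    · have hb0 : ∀ b : ℝ, S.indicator f (a, b) = 0 := by
        intro b
        apply Set.indicator_of_notMem
        rw [hSdef]
        intro hmem
        exact ha hmem.1
      calc (∫ b : ℝ, S.indicator f (a, b)) = ∫ _ : ℝ, (0:ℝ) := by simp_rw [hb0]
        _ = 0 := integral_zero _ _
        _ = (Ici (0:ℝ)).indicator Hfun a :=
            (Set.indicator_of_notMem (by simpa using ha) _).symm
  have key : (∫ p in S, f p) = (∫ a in Ioc 0 t, Hfun a) + ∫ a in Ioi t, Hfun a := by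
    have hindint : Integrable (S.indicator f) := hfint.indicator hS
    have step1 : (∫ p in S, f p) = ∫ a : ℝ, ∫ b : ℝ, S.indicator f (a, b) := by
      rw [← integral_indicator hS, Measure.volume_eq_prod]
      exact integral_prod _ (by rw [← Measure.volume_eq_prod]; exact hindint)
    have step2 : (∫ a : ℝ, ∫ b : ℝ, S.indicator f (a, b)) = ∫ a in Ioi 0, Hfun a := by
      simp_rw [hinner]
      rw [integral_indicator measurableSet_Ici]
      exact (setIntegral_congr_set Ioi_ae_eq_Ici).symm
    rw [step1, step2, ← Ioc_union_Ioi_eq_Ioi ht.le]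
    exact setIntegral_union Ioc_disjoint_Ioi_same measurableSet_Ioi
      hHint.integrableOn hHint.integrableOn
  have piece2 : (∫ a in Ioi t, Hfun a) = Real.exp (-(t ^ 2) / A) := by
    have hcong : ∀ a ∈ Ioi t, Hfun a = 2 * a / A * Real.exp (-(a ^ 2) / A) := by
      intro a ha
      rw [hHdef, hg1]; dsimp only
      rw [max_eq_right (by linarith [mem_Ioi.mp ha] : t - a ≤ 0)]
      norm_num
    rw [setIntegral_congr_fun measurableSet_Ioi hcong]
    exact tail_int hA t
  have htμ : t - μ = ν := by rw [hmdef, hndef]; field_simp; ring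
  have piece1 : (∫ a in Ioc 0 t, Hfun a)
      = Real.exp (-(t ^ 2) / (A + B)) *
        ((B / (A + B)) * (Real.exp (-(k * μ ^ 2)) - Real.exp (-(k * ν ^ 2)))
          + (2 * μ / A) * ((∫ r in (0:ℝ)..μ, Real.exp (-(k * r ^ 2)))
              + ∫ r in (0:ℝ)..ν, Real.exp (-(k * r ^ 2)))) := by
    have hpt : ∀ a ∈ Ioc (0:ℝ) t, Hfun a
        = Real.exp (-(t ^ 2) / (A + B)) * (2 * a / A * Real.exp (-(k * (a - μ) ^ 2))) := by
      intro a ha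
      rw [hHdef, hg1]; dsimp only
      rw [max_eq_left (by linarith [ha.2] : 0 ≤ t - a)]
      have hexp : Real.exp (-(a ^ 2) / A) * Real.exp (-(t - a) ^ 2 / B)
          = Real.exp (-(t ^ 2) / (A + B)) * Real.exp (-(k * (a - μ) ^ 2)) := by
        rw [← Real.exp_add, ← Real.exp_add]
        congr 1
        rw [hkdef, hmdef]
        field_simp
        ring
      calc 2 * a / A * Real.exp (-(a ^ 2) / A) * Real.exp (-(t - a) ^ 2 / B)
          = 2 * a / A * (Real.exp (-(a ^ 2) / A) * Real.exp (-(t - a) ^ 2 / B)) := by ring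
        _ = _ := by rw [hexp]; ring
    rw [setIntegral_congr_fun measurableSet_Ioc hpt, ← intervalIntegral.integral_of_le ht.le,
      intervalIntegral.integral_const_mul]
    congr 1
    have hsplit : ∀ a : ℝ, 2 * a / A * Real.exp (-(k * (a - μ) ^ 2))
        = (B / (A + B)) * (2 * k * (a - μ) * Real.exp (-(k * (a - μ) ^ 2)))
          + (2 * μ / A) * Real.exp (-(k * (a - μ) ^ 2)) := by
      intro a
      rw [hkdef, hmdef]
      field_simp
      ring
    simp_rw [hsplit]
    have hcontE : Continuous fun a : ℝ => Real.exp (-(k * (a - μ) ^ 2)) :=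
      Real.continuous_exp.comp
        ((continuous_const.mul ((continuous_id.sub continuous_const).pow 2)).neg)
    have hcontI1 : Continuous fun a : ℝ =>
        (B / (A + B)) * (2 * k * (a - μ) * Real.exp (-(k * (a - μ) ^ 2))) :=
      continuous_const.mul
        ((continuous_const.mul (continuous_id.sub continuous_const)).mul hcontE)
    have hcontI2 : Continuous fun a : ℝ => (2 * μ / A) * Real.exp (-(k * (a - μ) ^ 2)) :=
      continuous_const.mul hcontE
    rw [intervalIntegral.integral_add (hcontI1.intervalIntegrable 0 t)
      (hcontI2.intervalIntegrable 0 t),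
      intervalIntegral.integral_const_mul, intervalIntegral.integral_const_mul,
      I1_eval, J_eval, htμ, zero_sub, neg_sq]
  -- final assembly
  rw [key, piece1, piece2]
  set W1 : ℝ := ∫ r in (0:ℝ)..μ, Real.exp (-(k * r ^ 2)) with hW1
  set W2 : ℝ := ∫ r in (0:ℝ)..ν, Real.exp (-(k * r ^ 2)) with hW2
  have hclaim : 2 * k * μ * W1 ≤ k * μ ^ 2 + 1 - Real.exp (-(k * μ ^ 2)) := claimB hkpos hμ0
  have hW2le : W2 ≤ ν := W_le hkpos hν0
  have hEA : Real.exp (-(t ^ 2) / A)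
      = Real.exp (-(t ^ 2) / (A + B)) * Real.exp (-(k * ν ^ 2)) := by
    rw [← Real.exp_add]
    congr 1
    rw [hkdef, hndef]
    field_simp
    ring
  set e1 : ℝ := Real.exp (-(k * μ ^ 2)) with he1def
  set e2 : ℝ := Real.exp (-(k * ν ^ 2)) with he2def
  rw [hEA, ← mul_add,
    mul_comm (Real.exp (-(t ^ 2) / (A + B)))
      (B / (A + B) * (e1 - e2) + 2 * μ / A * (W1 + W2) + e2)]
  refine mul_le_mul_of_nonneg_right ?_ (Real.exp_pos _).le
  have he1pos : 0 < e1 := Real.exp_pos _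
  have he2pos : 0 < e2 := Real.exp_pos _
  have he2le : e2 ≤ 1 := Real.exp_le_one_iff.2 (neg_nonpos.2 (mul_nonneg hkpos.le (sq_nonneg ν)))
  have key1 : 2 * μ / A * W1 ≤ μ ^ 2 / A + B / (A + B) * (1 - e1) := by
    have h := mul_le_mul_of_nonneg_left hclaim (div_nonneg hB.le hs2.le)
    calc 2 * μ / A * W1 = B / (A + B) * (2 * k * μ * W1) := by
          rw [hkdef]; field_simp
      _ ≤ B / (A + B) * (k * μ ^ 2 + 1 - e1) := h
      _ = μ ^ 2 / A + B / (A + B) * (1 - e1) := by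
          rw [hkdef]; field_simp; ring
  have key2 : 2 * μ / A * W2 ≤ 2 * μ * ν / A := by
    have hc : (0:ℝ) ≤ 2 * μ / A := div_nonneg (by linarith) hA.le
    have := mul_le_mul_of_nonneg_left hW2le hc
    calc 2 * μ / A * W2 ≤ 2 * μ / A * ν := this
      _ = 2 * μ * ν / A := by ring
  have hABs : 1 - B / (A + B) = A / (A + B) := by field_simp; ring
  have hmain : B / (A + B) * (e1 - e2) + 2 * μ / A * (W1 + W2) + e2 ≤ t ^ 2 / A + 1 := by
    have h1 : (1 - B / (A + B)) * e2 ≤ 1 - B / (A + B) := by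
      rw [hABs]
      have := mul_le_mul_of_nonneg_left he2le (div_nonneg hA.le hs2.le)
      simpa using this
    have h2 : μ ^ 2 + 2 * μ * ν ≤ t ^ 2 := by nlinarith [sq_nonneg ν]
    have h3 : (μ ^ 2 + 2 * μ * ν) / A ≤ t ^ 2 / A := (div_le_div_iff_of_pos_right hA).2 h2
    calc B / (A + B) * (e1 - e2) + 2 * μ / A * (W1 + W2) + e2
        = B / (A + B) * (e1 - e2) + (2 * μ / A * W1 + 2 * μ / A * W2) + e2 := by ring
      _ ≤ B / (A + B) * (e1 - e2)
            + ((μ ^ 2 / A + B / (A + B) * (1 - e1)) + 2 * μ * ν / A) + e2 := by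
          linarith [key1, key2]
      _ = (μ ^ 2 + 2 * μ * ν) / A + B / (A + B) + (1 - B / (A + B)) * e2 := by ring
      _ ≤ (μ ^ 2 + 2 * μ * ν) / A + B / (A + B) + (1 - B / (A + B)) := by linarith [h1]
      _ = (μ ^ 2 + 2 * μ * ν) / A + 1 := by ring
      _ ≤ t ^ 2 / A + 1 := by linarith [h3]
  exact hmain

lemma decomp_identity {A B : ℝ} (hA : A ≠ 0) (hB : B ≠ 0) (hs : A + B ≠ 0) (a b : ℝ) :
    a ^ 2 / A + b ^ 2 / B
      = (a + b) ^ 2 / (A + B) + (B * a - A * b) ^ 2 / (A * B * (A + B)) := by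
  field_simp
  ring

lemma lower_bound {A B t : ℝ} (hA : 0 < A) (hB : 0 < B) (ht1 : 1 ≤ t)
    (htB : 2 * (A + B) / B ≤ t) :
    2 / (A + B) ^ 2 * Real.exp (-((A + B) / (A * B) + 3 / (A + B))) * t *
        Real.exp (-(t ^ 2) / (A + B))
      ≤ ∫ p in {p : ℝ × ℝ | 0 ≤ p.1 ∧ 0 ≤ p.2 ∧ t < p.1 + p.2},
          4 * p.1 * p.2 / (A * B) * Real.exp (-(p.1 ^ 2) / A - p.2 ^ 2 / B) := by
  have ht0 : (0:ℝ) < t := lt_of_lt_of_le one_pos ht1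
  have hs2 : (0:ℝ) < A + B := by linarith
  have hA' : A ≠ 0 := ne_of_gt hA
  have hB' : B ≠ 0 := ne_of_gt hB
  have hs2' : A + B ≠ 0 := ne_of_gt hs2
  set μ : ℝ := t * A / (A + B) with hmdef
  set ν : ℝ := t * B / (A + B) with hndef
  have hμ0 : 0 ≤ μ := by rw [hmdef]; positivity
  have hμν : μ + ν = t := by rw [hmdef, hndef]; field_simp
  have hν2 : 2 ≤ ν := by
    rw [hndef, le_div_iff₀ hs2]
    rw [div_le_iff₀ hB] at htB
    linarith
  set S : Set (ℝ × ℝ) := {p : ℝ × ℝ | 0 ≤ p.1 ∧ 0 ≤ p.2 ∧ t < p.1 + p.2} with hSdef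
  set f : ℝ × ℝ → ℝ :=
    fun p => 4 * p.1 * p.2 / (A * B) * Real.exp (-(p.1 ^ 2) / A - p.2 ^ 2 / B) with hfdef
  have hS : MeasurableSet S := by
    rw [hSdef]
    have heq : {p : ℝ × ℝ | 0 ≤ p.1 ∧ 0 ≤ p.2 ∧ t < p.1 + p.2}
        = {p : ℝ × ℝ | 0 ≤ p.1} ∩ ({p : ℝ × ℝ | 0 ≤ p.2} ∩ {p : ℝ × ℝ | t < p.1 + p.2}) := rfl
    rw [heq]
    exact (measurableSet_le measurable_const measurable_fst).inter
      ((measurableSet_le measurable_const measurable_snd).inter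
        (measurableSet_lt measurable_const (measurable_fst.add measurable_snd)))
  have hfint : Integrable f := by rw [hfdef]; exact f_int hA hB
  set R : Set (ℝ × ℝ) :=
    regionBetween (fun a : ℝ => t - a) (fun a : ℝ => t - a + 1 / t) (Icc μ (μ + 1)) with hRdef
  have hRmeas : MeasurableSet R := by
    rw [hRdef]
    exact measurableSet_regionBetween (measurable_const.sub measurable_id)
      ((measurable_const.sub measurable_id).add measurable_const) measurableSet_Icc
  have hsub : R ⊆ S := by
    rintro ⟨a, b⟩ hp
    rw [hRdef] at hp
    obtain ⟨ha, hb⟩ := hp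
    obtain ⟨ha1, ha2⟩ := ha
    obtain ⟨hb1, hb2⟩ := hb
    rw [hSdef]
    refine ⟨by dsimp only; linarith, by dsimp only at *; linarith, by dsimp only at *; linarith⟩
  have hle : ∀ x ∈ Icc μ (μ + 1), t - x ≤ t - x + 1 / t := fun x _ =>
    le_add_of_nonneg_right (by positivity)
  have hc1 : Continuous fun a : ℝ => t - a := continuous_const.sub continuous_id
  have hc2 : Continuous fun a : ℝ => t - a + 1 / t := hc1.add continuous_const
  have hvol : volume R = ENNReal.ofReal (1 / t) := by
    rw [hRdef, Measure.volume_eq_prod,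
      volume_regionBetween_eq_integral
        hc1.integrableOn_Icc hc2.integrableOn_Icc
        measurableSet_Icc hle]
    congr 1
    have hconst : ∀ y ∈ Icc μ (μ + 1),
        ((fun a : ℝ => t - a + 1 / t) - fun a : ℝ => t - a) y = 1 / t := by
      intro y _
      simp [Pi.sub_apply]
    rw [setIntegral_congr_fun measurableSet_Icc hconst, setIntegral_const, Real.volume_real_Icc]
    have : μ + 1 - μ = (1:ℝ) := by ring
    rw [this]
    simp
  set D : ℝ := (A + B) / (A * B) + 3 / (A + B) with hDdef
  set m₀ : ℝ := 2 * t ^ 2 / (A + B) ^ 2 *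
    (Real.exp (-D) * Real.exp (-(t ^ 2) / (A + B))) with hm0def
  have hlow : ∀ p ∈ R, m₀ ≤ f p := by
    rintro ⟨a, b⟩ hp
    rw [hRdef] at hp
    obtain ⟨⟨ha1, ha2⟩, hb1, hb2⟩ := hp
    dsimp only at ha1 ha2 hb1 hb2
    have hb0 : ν - 1 ≤ b := by linarith
    have hbpos : (0:ℝ) < b := by linarith
    have hapos : (0:ℝ) ≤ a := by linarith
    have hABpos : (0:ℝ) < A * B := mul_pos hA hB
    have hμν' : (A + B) * μ = A * t := by rw [hmdef]; field_simp
    have hcoef : 2 * t ^ 2 / (A + B) ^ 2 ≤ 4 * a * b / (A * B) := by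
      have h1 : μ * (ν - 1) ≤ a * b :=
        mul_le_mul ha1 hb0 (by linarith) hapos
      have h3 : μ * (ν / 2) ≤ μ * (ν - 1) :=
        mul_le_mul_of_nonneg_left (by linarith) hμ0
      calc 2 * t ^ 2 / (A + B) ^ 2 = 4 * (μ * (ν / 2)) / (A * B) := by
            rw [hmdef, hndef]; field_simp; ring
        _ ≤ 4 * (a * b) / (A * B) :=
            (div_le_div_iff_of_pos_right hABpos).2 (by nlinarith)
        _ = 4 * a * b / (A * B) := by ring
    have hub : a + b ≤ t + 1 / t := by linarith
    have hexp : a ^ 2 / A + b ^ 2 / B ≤ t ^ 2 / (A + B) + D := by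
      rw [decomp_identity hA' hB' hs2' a b, hDdef]
      have hab0 : (0:ℝ) ≤ a + b := by linarith
      have h1t : 1 / t ≤ 1 := by rw [div_le_one ht0]; exact ht1
      have h1t0 : (0:ℝ) < 1 / t := by positivity
      have htinv : t * (1 / t) = 1 := by field_simp
      have h5 : (a + b) ^ 2 ≤ t ^ 2 + 3 := by nlinarith
      have h6 : (B * a - A * b) ^ 2 ≤ (A + B) ^ 2 := by
        have hrep : B * a - A * b = (A + B) * a - A * (a + b) := by ring
        have hup : B * a - A * b ≤ A + B := by
          rw [hrep]
          have c1 : (A + B) * a ≤ (A + B) * (μ + 1) := mul_le_mul_of_nonneg_left ha2 hs2.le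
          have c2 : A * t ≤ A * (a + b) :=
            mul_le_mul_of_nonneg_left (le_of_lt (by linarith)) hA.le
          linarith
        have hdown : -(A + B) ≤ B * a - A * b := by
          rw [hrep]
          have c1 : (A + B) * μ ≤ (A + B) * a := mul_le_mul_of_nonneg_left ha1 hs2.le
          have c2 : A * (a + b) ≤ A * (t + 1 / t) := mul_le_mul_of_nonneg_left hub hA.le
          have c4 : A * (1 / t) ≤ A + B := by nlinarith
          linarith [mul_add A t (1 / t)]
        nlinarith
      have d1 : (a + b) ^ 2 / (A + B) ≤ (t ^ 2 + 3) / (A + B) :=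
        (div_le_div_iff_of_pos_right hs2).2 h5
      have d2 : (B * a - A * b) ^ 2 / (A * B * (A + B)) ≤ (A + B) ^ 2 / (A * B * (A + B)) :=
        (div_le_div_iff_of_pos_right (by positivity)).2 h6
      have d3 : (A + B) ^ 2 / (A * B * (A + B)) = (A + B) / (A * B) := by
        field_simp
      have d4 : (t ^ 2 + 3) / (A + B) = t ^ 2 / (A + B) + 3 / (A + B) := by ring
      linarith
    have hexp2 : Real.exp (-D) * Real.exp (-(t ^ 2) / (A + B))
        ≤ Real.exp (-(a ^ 2) / A - b ^ 2 / B) := by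
      rw [← Real.exp_add]
      apply Real.exp_le_exp.2
      have : -D + -(t ^ 2) / (A + B) = -(t ^ 2 / (A + B) + D) := by ring
      rw [this]
      have heq2 : -(a ^ 2) / A - b ^ 2 / B = -(a ^ 2 / A + b ^ 2 / B) := by ring
      rw [heq2]
      exact neg_le_neg hexp
    rw [hfdef, hm0def]
    dsimp only
    calc 2 * t ^ 2 / (A + B) ^ 2 * (Real.exp (-D) * Real.exp (-(t ^ 2) / (A + B)))
        ≤ 4 * a * b / (A * B) * (Real.exp (-D) * Real.exp (-(t ^ 2) / (A + B))) := by
          apply mul_le_mul hcoef le_rfl (by positivity) (by positivity)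
      _ ≤ 4 * a * b / (A * B) * Real.exp (-(a ^ 2) / A - b ^ 2 / B) := by
          apply mul_le_mul_of_nonneg_left hexp2 (by positivity)
  have hnonneg : 0 ≤ᵐ[volume.restrict S] f := by
    refine (ae_restrict_iff' hS).2 (Filter.Eventually.of_forall fun p hp => ?_)
    rw [hSdef] at hp
    rw [hfdef]
    dsimp only
    exact mul_nonneg (div_nonneg (by nlinarith [mul_nonneg hp.1 hp.2.1]) (mul_pos hA hB).le)
      (Real.exp_pos _).le
  have hRint : m₀ * (volume R).toReal ≤ ∫ p in R, f p :=
    setIntegral_ge_of_const_le_real hRmeas (by rw [hvol]; exact ENNReal.ofReal_ne_top) hlow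
      hfint.integrableOn
  have hmono : (∫ p in R, f p) ≤ ∫ p in S, f p :=
    setIntegral_mono_set hfint.integrableOn hnonneg (HasSubset.Subset.eventuallyLE hsub)
  have htoReal : (volume R).toReal = 1 / t := by
    rw [hvol, ENNReal.toReal_ofReal (by positivity)]
  calc 2 / (A + B) ^ 2 * Real.exp (-((A + B) / (A * B) + 3 / (A + B))) * t *
        Real.exp (-(t ^ 2) / (A + B))
      = m₀ * (1 / t) := by rw [hm0def, hDdef]; field_simp
    _ = m₀ * (volume R).toReal := by rw [htoReal]
    _ ≤ ∫ p in R, f p := hRint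
    _ ≤ ∫ p in S, f p := hmono

/-- Quantitative two-sided bounds on the ℓ¹ tail probability
`P(λ) = P(|α| + |β| > z₀ λ)` of two independent mean-zero complex Gaussians. -/
theorem ell1_tail_bounds (σα σβ z₀ : ℝ) (hσα : 0 < σα) (hσβ : 0 < σβ) (hz₀ : 0 < z₀)
    (P : ℝ → ℝ)
    (hP : ∀ lam : ℝ, P lam =
      ∫ p in {p : ℝ × ℝ | 0 ≤ p.1 ∧ 0 ≤ p.2 ∧ z₀ * lam < p.1 + p.2},
        4 * p.1 * p.2 / (σα ^ 2 * σβ ^ 2) *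
          Real.exp (-(p.1 ^ 2) / σα ^ 2 - p.2 ^ 2 / σβ ^ 2)) :
    (∀ lam : ℝ, 0 < lam →
      P lam ≤ (z₀ ^ 2 * lam ^ 2 / σα ^ 2 + 1) *
        Real.exp (-(z₀ ^ 2 * lam ^ 2) / (σα ^ 2 + σβ ^ 2))) ∧
    ∃ c > 0, ∃ lam₀ > 0, ∀ lam : ℝ, lam₀ ≤ lam →
      c * lam * Real.exp (-(z₀ ^ 2 * lam ^ 2) / (σα ^ 2 + σβ ^ 2)) ≤ P lam := by
  have hA : (0:ℝ) < σα ^ 2 := by positivity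
  have hB : (0:ℝ) < σβ ^ 2 := by positivity
  constructor
  · intro lam hlam
    rw [hP lam]
    have ht : 0 < z₀ * lam := mul_pos hz₀ hlam
    have h := upper_bound hA hB ht
    have hsq : (z₀ * lam) ^ 2 = z₀ ^ 2 * lam ^ 2 := by ring
    rw [hsq] at h
    exact h
  · refine ⟨2 / (σα ^ 2 + σβ ^ 2) ^ 2 *
      Real.exp (-((σα ^ 2 + σβ ^ 2) / (σα ^ 2 * σβ ^ 2) + 3 / (σα ^ 2 + σβ ^ 2))) * z₀,
      by positivity,
      max (1 / z₀) (2 * (σα ^ 2 + σβ ^ 2) / (σβ ^ 2 * z₀)),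
      by positivity, ?_⟩
    intro lam hlam
    have ht1 : 1 ≤ z₀ * lam := by
      have h := le_trans (le_max_left (1 / z₀) (2 * (σα ^ 2 + σβ ^ 2) / (σβ ^ 2 * z₀))) hlam
      rw [div_le_iff₀ hz₀] at h
      nlinarith
    have htB : 2 * (σα ^ 2 + σβ ^ 2) / σβ ^ 2 ≤ z₀ * lam := by
      have h := le_trans (le_max_right (1 / z₀) (2 * (σα ^ 2 + σβ ^ 2) / (σβ ^ 2 * z₀))) hlam
      rw [div_le_iff₀ (by positivity : (0:ℝ) < σβ ^ 2 * z₀)] at h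
      rw [div_le_iff₀ hB]
      nlinarith
    have h := lower_bound hA hB ht1 htB
    rw [hP lam]
    have hsq : -(z₀ ^ 2 * lam ^ 2) = -((z₀ * lam) ^ 2) := by ring
    calc 2 / (σα ^ 2 + σβ ^ 2) ^ 2 *
          Real.exp (-((σα ^ 2 + σβ ^ 2) / (σα ^ 2 * σβ ^ 2) + 3 / (σα ^ 2 + σβ ^ 2))) * z₀ *
          lam * Real.exp (-(z₀ ^ 2 * lam ^ 2) / (σα ^ 2 + σβ ^ 2))
        = 2 / (σα ^ 2 + σβ ^ 2) ^ 2 *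
          Real.exp (-((σα ^ 2 + σβ ^ 2) / (σα ^ 2 * σβ ^ 2) + 3 / (σα ^ 2 + σβ ^ 2))) *
          (z₀ * lam) * Real.exp (-((z₀ * lam) ^ 2) / (σα ^ 2 + σβ ^ 2)) := by
          rw [← hsq]; ring
      _ ≤ _ := h
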